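/- The function f(z1,z2) = 1 − z1 z2 is cyclic in 𝔇_α if and only if α ≤ 1/2. -/

import Mathlib

open scoped ENNReal NNReal Classical
open Filter

/-- Weight `(k+1)^α` as an extended nonnegative real. -/
noncomputable def wt (α : ℝ) (k : ℕ) : ℝ≥0∞ := ((k : ℝ≥0∞) + 1) ^ α

/-- Squared norm of the Dirichlet-type space `𝔇_α` of the bidisk, at the level of
Taylor coefficients `a k l`. -/
noncomputable def Dnorm2 (α : ℝ) (a : ℕ → ℕ → ℂ) : ℝ≥0∞ :=
  ∑' p : ℕ × ℕ, wt α p.1 * wt α p.2 * ((‖a p.1 p.2‖₊ : ℝ≥0∞)) ^ 2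

/-- Squared norm of the one-variable Dirichlet-type space `D_α`. -/
noncomputable def dnorm2 (α : ℝ) (a : ℕ → ℂ) : ℝ≥0∞ :=
  ∑' k : ℕ, wt α k * ((‖a k‖₊ : ℝ≥0∞)) ^ 2

/-- Cauchy product (coefficients of the product of two power series in two variables). -/
noncomputable def conv2 (p a : ℕ → ℕ → ℂ) : ℕ → ℕ → ℂ := fun k l =>
  ∑ i ∈ Finset.range (k + 1), ∑ j ∈ Finset.range (l + 1), p i j * a (k - i) (l - j)

/-- Cauchy product in one variable. -/
noncomputable def conv1 (p a : ℕ → ℂ) : ℕ → ℂ := fun k =>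
  ∑ i ∈ Finset.range (k + 1), p i * a (k - i)

/-- Coefficients of the constant function `1` in two variables. -/
def one2 : ℕ → ℕ → ℂ := fun k l => if k = 0 ∧ l = 0 then 1 else 0

/-- Coefficients of the constant function `1` in one variable. -/
def one1 : ℕ → ℂ := fun k => if k = 0 then 1 else 0

/-- `p` is (the coefficient sequence of) a polynomial in `𝔓_n`. -/
def IsPoly2 (n : ℕ) (p : ℕ → ℕ → ℂ) : Prop := ∀ k l, n < k ∨ n < l → p k l = 0

/-- `p` is a one-variable polynomial of degree at most `n`. -/
def IsPoly1 (n : ℕ) (p : ℕ → ℂ) : Prop := ∀ k, n < k → p k = 0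

/-- Cyclicity of `a` in `𝔇_α`: some sequence of polynomials `p n` has `‖p n · f - 1‖_α → 0`. -/
def Cyclic2 (α : ℝ) (a : ℕ → ℕ → ℂ) : Prop :=
  ∃ p : ℕ → ℕ → ℕ → ℂ, (∀ n, ∃ m, IsPoly2 m (p n)) ∧
    Tendsto (fun n => Dnorm2 α (fun k l => conv2 (p n) a k l - one2 k l)) atTop (nhds 0)

/-- Cyclicity of `a` in the one-variable space `D_α`. -/
def Cyclic1 (α : ℝ) (a : ℕ → ℂ) : Prop :=
  ∃ p : ℕ → ℕ → ℂ, (∀ n, ∃ m, IsPoly1 m (p n)) ∧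
    Tendsto (fun n => dnorm2 α (fun k => conv1 (p n) a k - one1 k)) atTop (nhds 0)

/-- Squared distance `dist²_{𝔇_α}(1, f · 𝔓_n)`. -/
noncomputable def distP2 (α : ℝ) (n : ℕ) (a : ℕ → ℕ → ℂ) : ℝ≥0∞ :=
  ⨅ (p : ℕ → ℕ → ℂ) (_ : IsPoly2 n p), Dnorm2 α (fun k l => conv2 p a k l - one2 k l)


-- ===== Auxiliary material =====

/-- The coefficient function of `f(z₁,z₂) = 1 - z₁ z₂`. -/
noncomputable def fcoef : ℕ → ℕ → ℂ := fun k l =>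
  if k = 0 ∧ l = 0 then 1 else if k = 1 ∧ l = 1 then -1 else 0

lemma conv_f (p : ℕ → ℕ → ℂ) (k l : ℕ) :
    conv2 p fcoef k l = p k l - (if 1 ≤ k ∧ 1 ≤ l then p (k-1) (l-1) else 0) := by
  unfold conv2 fcoef
  have h : ∀ i ∈ Finset.range (k+1), ∀ j ∈ Finset.range (l+1),
      p i j * (if k - i = 0 ∧ l - j = 0 then (1:ℂ) else if k - i = 1 ∧ l - j = 1 then -1 else 0)
      = (if j = l then (if i = k then p i j else 0) else 0)
        + (if j = l - 1 ∧ 1 ≤ l then (if i = k - 1 ∧ 1 ≤ k then -p i j else 0) else 0) := by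
    intro i hi j hj
    simp only [Finset.mem_range] at hi hj
    split_ifs <;> first | (exfalso; omega) | ring
  rw [Finset.sum_congr rfl (fun i hi => Finset.sum_congr rfl (h i hi))]
  have e1 : ∀ i ∈ Finset.range (k+1),
      (∑ j ∈ Finset.range (l+1), ((if j = l then (if i = k then p i j else 0) else 0)
        + (if j = l - 1 ∧ 1 ≤ l then (if i = k - 1 ∧ 1 ≤ k then -p i j else 0) else 0)))
      = (if i = k then p i l else 0)
        + (if 1 ≤ l then (if i = k - 1 ∧ 1 ≤ k then -p i (l-1) else 0) else 0) := by
    intro i hi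
    rw [Finset.sum_add_distrib]
    congr 1
    · rw [Finset.sum_ite_eq' (Finset.range (l+1)) l]
      simp
    · by_cases hl : 1 ≤ l
      · simp only [hl, and_true, if_pos]
        rw [Finset.sum_ite_eq' (Finset.range (l+1)) (l-1)]
        have : l - 1 ∈ Finset.range (l+1) := by simp
        simp [this]
      · simp only [hl, and_false, if_false, if_neg hl, Finset.sum_const_zero]
  rw [Finset.sum_congr rfl e1, Finset.sum_add_distrib]
  rw [Finset.sum_ite_eq' (Finset.range (k+1)) k]
  rw [if_pos (by simp : k ∈ Finset.range (k+1))]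
  by_cases hl : 1 ≤ l
  · simp only [hl, if_pos]
    have e2 : ∀ i, (if i = k - 1 ∧ 1 ≤ k then -p i (l-1) else 0)
        = (if i = k - 1 then (if 1 ≤ k then -p i (l-1) else 0) else 0) := by
      intro i; split_ifs <;> tauto
    rw [Finset.sum_congr rfl (fun i _ => e2 i), Finset.sum_ite_eq' (Finset.range (k+1)) (k-1)]
    rw [if_pos (by simp : k - 1 ∈ Finset.range (k+1))]
    by_cases hk : 1 ≤ k
    · simp only [hk, hl, and_self, if_pos, true_and]
      ring
    · simp [hk]
  · simp [hl]

lemma wt_eq (α : ℝ) (k : ℕ) : wt α k = ENNReal.ofReal (((k:ℝ)+1) ^ α) := by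
  unfold wt
  rw [← ENNReal.ofReal_rpow_of_pos (by positivity)]
  congr 1
  rw [ENNReal.ofReal_add (by positivity) zero_le_one, ENNReal.ofReal_natCast,
    ENNReal.ofReal_one]

lemma term2 (α : ℝ) (k : ℕ) (z : ℂ) :
    wt α k * wt α k * ((‖z‖₊ : ℝ≥0∞)) ^ 2
      = ENNReal.ofReal (((k:ℝ)+1) ^ (2*α) * ‖z‖^2) := by
  rw [wt_eq, ← ENNReal.ofReal_mul (by positivity), ← Real.rpow_add (by positivity),
    ← enorm_eq_nnnorm, ← ofReal_norm, ← ENNReal.ofReal_pow (norm_nonneg z),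
    ← ENNReal.ofReal_mul (by positivity)]
  ring_nf

noncomputable def Sfun (β : ℝ) (n : ℕ) : ℝ := ∑ j ∈ Finset.range (n+1), ((j:ℝ)+1) ^ (-β)

lemma Sfun_pos (β : ℝ) (n : ℕ) : 0 < Sfun β n := by
  apply Finset.sum_pos (fun j _ => by positivity) ⟨0, by simp⟩

lemma Sfun_zero (β : ℝ) : Sfun β 0 = 1 := by
  simp [Sfun, Real.one_rpow]

lemma Sfun_succ (β : ℝ) (k : ℕ) (hk : 1 ≤ k) :
    Sfun β k = Sfun β (k-1) + ((k:ℝ)+1)^(-β) := by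
  unfold Sfun
  have h : k - 1 + 1 = k := by omega
  rw [Finset.sum_range_succ, h]

lemma Sfun_tendsto (β : ℝ) (hβ : β ≤ 1) : Tendsto (Sfun β) atTop atTop := by
  have hmono : ∀ n, (∑ j ∈ Finset.range (n+1), 1/((j:ℝ)+1)) ≤ Sfun β n := by
    intro n
    apply Finset.sum_le_sum
    intro j _
    have h1 : ((j:ℝ)+1) ^ (-(1:ℝ)) ≤ ((j:ℝ)+1) ^ (-β) :=
      Real.rpow_le_rpow_of_exponent_le (by linarith [Nat.cast_nonneg (α := ℝ) j]) (by linarith)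
    calc 1/((j:ℝ)+1) = ((j:ℝ)+1) ^ (-(1:ℝ)) := by
          rw [Real.rpow_neg_one]; ring
      _ ≤ _ := h1
  exact tendsto_atTop_mono hmono
    (Real.tendsto_sum_range_one_div_nat_succ_atTop.comp (tendsto_add_atTop_nat 1))

noncomputable def pseq (β : ℝ) (n : ℕ) : ℕ → ℕ → ℂ := fun k l =>
  if k = l ∧ k ≤ n then ((1 - Sfun β k / Sfun β n : ℝ) : ℂ) else 0

lemma conv_pseq (β : ℝ) (n k l : ℕ) :
    conv2 (pseq β n) fcoef k l - one2 k l
      = if k = l ∧ k ≤ n then ((-(((k:ℝ)+1)^(-β) / Sfun β n) : ℝ) : ℂ) else 0 := by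
  rw [conv_f]
  unfold pseq one2
  have hSn := Sfun_pos β n
  by_cases hkl : k = l
  · subst hkl
    simp only [eq_self_iff_true, true_and, and_self]
    by_cases hk1 : 1 ≤ k
    · rw [if_pos hk1, if_neg (by omega : ¬ k = 0)]
      by_cases hkn : k ≤ n
      · rw [if_pos hkn, if_pos (by omega : k - 1 ≤ n), if_pos hkn]
        push_cast [Sfun_succ β k hk1]
        ring
      · rw [if_neg hkn, if_neg hkn]
        by_cases hkn1 : k - 1 ≤ n
        · rw [if_pos hkn1]
          have h2 : k - 1 = n := by omega
          rw [h2, div_self (ne_of_gt hSn)]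
          norm_num
        · rw [if_neg hkn1]; norm_num
    · have hk0 : k = 0 := by omega
      subst hk0
      rw [if_pos (Nat.zero_le n), if_neg hk1, if_pos rfl, if_pos (Nat.zero_le n), Sfun_zero]
      norm_num [Real.one_rpow]
  · have h1 : ¬(k = l ∧ k ≤ n) := by tauto
    have h2 : ¬(k = 0 ∧ l = 0) := by omega
    rw [if_neg h1, if_neg h2, if_neg h1, sub_zero, zero_sub, neg_eq_zero]
    by_cases hk : 1 ≤ k ∧ 1 ≤ l
    · rw [if_pos hk, if_neg (by omega : ¬(k-1 = l-1 ∧ k-1 ≤ n))]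
    · rw [if_neg hk]

-- a supported on the diagonal up to n, with values v
lemma Dnorm2_diag (α : ℝ) (n : ℕ) (a : ℕ → ℕ → ℂ) (v : ℕ → ℝ)
    (ha : ∀ k l, a k l = if k = l ∧ k ≤ n then ((v k : ℝ) : ℂ) else 0) :
    Dnorm2 α a = ENNReal.ofReal (∑ k ∈ Finset.range (n+1), ((k:ℝ)+1)^(2*α) * (v k)^2) := by
  unfold Dnorm2
  rw [tsum_eq_sum (s := (Finset.range (n+1)).image (fun k => (k, k)))
    (fun q hq => ?_)]
  · rw [Finset.sum_image (fun x _ y _ h => (Prod.mk.injEq _ _ _ _ ▸ h).1)]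
    have step : ∀ k ∈ Finset.range (n+1),
        wt α (k,k).1 * wt α (k,k).2 * ((‖a (k,k).1 (k,k).2‖₊ : ℝ≥0∞)) ^ 2
          = ENNReal.ofReal (((k:ℝ)+1)^(2*α) * (v k)^2) := by
      intro k hk
      simp only [Finset.mem_range] at hk
      simp only
      rw [ha k k, if_pos ⟨rfl, by omega⟩, term2]
      congr 1
      rw [Complex.norm_real, Real.norm_eq_abs, sq_abs]
    rw [Finset.sum_congr rfl step,
      ← ENNReal.ofReal_sum_of_nonneg (fun k _ => by positivity)]
  · have : a q.1 q.2 = 0 := by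
      rw [ha]
      apply if_neg
      rintro ⟨h1, h2⟩
      exact hq (Finset.mem_image.2 ⟨q.1, by simp [Finset.mem_range]; omega,
        Prod.ext rfl h1⟩)
    rw [this]
    simp

noncomputable def Cval (α : ℝ) : ℝ := ∑' j : ℕ, ((j:ℝ)+1) ^ (-(2*α))

lemma Cval_summable (α : ℝ) (hα : 1/2 < α) :
    Summable (fun j : ℕ => ((j:ℝ)+1) ^ (-(2*α))) := by
  have h1 : Summable (fun n : ℕ => 1/(n:ℝ) ^ (2*α)) :=
    Real.summable_one_div_nat_rpow.2 (by linarith)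
  have h2 := (summable_nat_add_iff 1).2 h1
  apply h2.congr
  intro j
  rw [Real.rpow_neg (by positivity)]
  push_cast
  ring

lemma Cval_pos (α : ℝ) (hα : 1/2 < α) : 0 < Cval α := by
  have h := Summable.le_tsum (Cval_summable α hα) 0 (fun j _ => by positivity)
  have h0 : ((0:ℕ):ℝ) + 1 = 1 := by norm_num
  rw [h0, Real.one_rpow] at h
  unfold Cval
  linarith

lemma lower_bound (α : ℝ) (hα : 1/2 < α) (m : ℕ) (p : ℕ → ℕ → ℂ) (hp : IsPoly2 m p) :
    ENNReal.ofReal (1 / Cval α)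
      ≤ Dnorm2 α (fun k l => conv2 p fcoef k l - one2 k l) := by
  set g : ℕ → ℂ := fun k => conv2 p fcoef k k - one2 k k with hg
  set N := m + 2 with hN
  have hC := Cval_pos α hα
  -- telescoping
  have htel : ∑ k ∈ Finset.range N, g k = -1 := by
    have hgk : ∀ k, g k = p k k - (if 1 ≤ k then p (k-1) (k-1) else 0)
        - (if k = 0 then (1:ℂ) else 0) := by
      intro k
      rw [hg]
      simp only [conv_f, one2, and_self]
    rw [Finset.sum_congr rfl (fun k _ => hgk k)]
    rw [Finset.sum_sub_distrib, Finset.sum_sub_distrib]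
    rw [Finset.sum_ite_eq' (Finset.range N) 0 (fun _ => (1:ℂ)), if_pos (by simp [hN])]
    have e1 : ∑ k ∈ Finset.range N, p k k
        = (∑ k ∈ Finset.range (m+1), p k k) + p (m+1) (m+1) := by
      rw [hN, Finset.sum_range_succ]
    have e2 : ∑ k ∈ Finset.range N, (if 1 ≤ k then p (k-1) (k-1) else 0)
        = ∑ k ∈ Finset.range (m+1), p k k := by
      rw [hN, Finset.sum_range_succ']
      simp
    rw [e1, e2, hp (m+1) (m+1) (Or.inl (by omega))]
    ring
  -- 1 ≤ sum of norms
  have hnorm1 : (1:ℝ) ≤ ∑ k ∈ Finset.range N, ‖g k‖ := by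
    calc (1:ℝ) = ‖∑ k ∈ Finset.range N, g k‖ := by rw [htel]; simp
      _ ≤ ∑ k ∈ Finset.range N, ‖g k‖ := norm_sum_le _ _
  -- Cauchy-Schwarz
  set T := ∑ k ∈ Finset.range N, ((k:ℝ)+1)^(2*α) * ‖g k‖^2 with hT
  have hT0 : 0 ≤ T := Finset.sum_nonneg (fun k _ => by positivity)
  have hCS := Finset.sum_mul_sq_le_sq_mul_sq (Finset.range N)
    (fun k => ((k:ℝ)+1)^(-α)) (fun k => ((k:ℝ)+1)^α * ‖g k‖)
  have e3 : ∑ k ∈ Finset.range N, ((k:ℝ)+1)^(-α) * (((k:ℝ)+1)^α * ‖g k‖)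
      = ∑ k ∈ Finset.range N, ‖g k‖ := by
    apply Finset.sum_congr rfl
    intro k _
    rw [← mul_assoc, ← Real.rpow_add (by positivity)]
    norm_num
  have e4 : ∑ k ∈ Finset.range N, (((k:ℝ)+1)^(-α))^2
      = ∑ k ∈ Finset.range N, ((k:ℝ)+1)^(-(2*α)) := by
    apply Finset.sum_congr rfl
    intro k _
    rw [sq, ← Real.rpow_add (by positivity)]
    congr 1
    ring
  have e5 : ∑ k ∈ Finset.range N, (((k:ℝ)+1)^α * ‖g k‖)^2 = T := by
    apply Finset.sum_congr rfl
    intro k _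
    rw [mul_pow, sq (((k:ℝ)+1)^α), ← Real.rpow_add (by positivity)]
    congr 2
    ring
  rw [e3, e4, e5] at hCS
  have e6 : ∑ k ∈ Finset.range N, ((k:ℝ)+1)^(-(2*α)) ≤ Cval α :=
    Summable.sum_le_tsum _ (fun k _ => by positivity) (Cval_summable α hα)
  have hTC : 1 ≤ Cval α * T := by
    have h7 : (1:ℝ) ≤ (∑ k ∈ Finset.range N, ‖g k‖)^2 := by nlinarith
    have h8 : (∑ k ∈ Finset.range N, ((k:ℝ)+1)^(-(2*α))) * T ≤ Cval α * T :=
      mul_le_mul_of_nonneg_right e6 hT0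
    linarith
  have hfinal : 1 / Cval α ≤ T := by
    rw [div_le_iff₀ hC]
    linarith [mul_comm (Cval α) T]
  -- back to ENNReal
  calc ENNReal.ofReal (1 / Cval α) ≤ ENNReal.ofReal T := ENNReal.ofReal_le_ofReal hfinal
    _ = ∑ k ∈ Finset.range N, ENNReal.ofReal (((k:ℝ)+1)^(2*α) * ‖g k‖^2) :=
        ENNReal.ofReal_sum_of_nonneg (fun k _ => by positivity)
    _ = ∑ k ∈ Finset.range N, wt α (k,k).1 * wt α (k,k).2 * ((‖g (k,k).1‖₊ : ℝ≥0∞))^2 :=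
        Finset.sum_congr rfl (fun k _ => (term2 α k (g k)).symm)
    _ = ∑ q ∈ (Finset.range N).image (fun k => (k,k)),
          wt α q.1 * wt α q.2 * ((‖conv2 p fcoef q.1 q.2 - one2 q.1 q.2‖₊ : ℝ≥0∞))^2 := by
        rw [Finset.sum_image (fun x _ y _ h => (Prod.mk.injEq _ _ _ _ ▸ h).1)]
    _ ≤ _ := ENNReal.sum_le_tsum _


lemma sum_pseq (α : ℝ) (n : ℕ) :
    ∑ k ∈ Finset.range (n+1),
        ((k:ℝ)+1)^(2*α) * (-(((k:ℝ)+1)^(-(2*α)) / Sfun (2*α) n))^2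
      = 1 / Sfun (2*α) n := by
  have hSn := Sfun_pos (2*α) n
  have step : ∀ k ∈ Finset.range (n+1),
      ((k:ℝ)+1)^(2*α) * (-(((k:ℝ)+1)^(-(2*α)) / Sfun (2*α) n))^2
        = ((k:ℝ)+1)^(-(2*α)) * (1 / Sfun (2*α) n ^ 2) := by
    intro k _
    have hx : (0:ℝ) < (k:ℝ)+1 := by positivity
    have hxx : ((k:ℝ)+1)^(2*α) * (((k:ℝ)+1)^(-(2*α)))^2 = ((k:ℝ)+1)^(-(2*α)) := by
      rw [sq, ← Real.rpow_add hx, ← Real.rpow_add hx]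
      congr 1
      ring
    calc ((k:ℝ)+1)^(2*α) * (-(((k:ℝ)+1)^(-(2*α)) / Sfun (2*α) n))^2
        = (((k:ℝ)+1)^(2*α) * (((k:ℝ)+1)^(-(2*α)))^2) * (1 / Sfun (2*α) n ^ 2) := by
          ring
      _ = ((k:ℝ)+1)^(-(2*α)) * (1 / Sfun (2*α) n ^ 2) := by rw [hxx]
  rw [Finset.sum_congr rfl step, ← Finset.sum_mul]
  have : ∑ k ∈ Finset.range (n+1), ((k:ℝ)+1)^(-(2*α)) = Sfun (2*α) n := rfl
  rw [this, sq]
  field_simp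

lemma dnorm_pseq (α : ℝ) (n : ℕ) :
    Dnorm2 α (fun k l => conv2 (pseq (2*α) n) fcoef k l - one2 k l)
      = ENNReal.ofReal (1 / Sfun (2*α) n) := by
  rw [Dnorm2_diag α n _ (fun k => -(((k:ℝ)+1)^(-(2*α)) / Sfun (2*α) n))
    (fun k l => conv_pseq (2*α) n k l), sum_pseq]

lemma backward (α : ℝ) (hα : α ≤ 1/2) : Cyclic2 α fcoef := by
  refine ⟨fun n => pseq (2*α) n, fun n => ⟨n, ?_⟩, ?_⟩
  · intro k l h
    unfold pseq
    apply if_neg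
    rintro ⟨rfl, hkn⟩
    omega
  · simp only [dnorm_pseq]
    have h1 : Tendsto (fun n => Sfun (2*α) n) atTop atTop :=
      Sfun_tendsto (2*α) (by linarith)
    have h2 : Tendsto (fun n => 1 / Sfun (2*α) n) atTop (nhds 0) := by
      simp only [one_div]
      exact h1.inv_tendsto_atTop
    have h3 := ENNReal.tendsto_ofReal h2
    rwa [ENNReal.ofReal_zero] at h3

/-- f = 1 - z₁z₂ is cyclic in 𝔇_α iff α ≤ 1/2. -/
theorem stmt12 (α : ℝ) :
    Cyclic2 α (fun k l => if k = 0 ∧ l = 0 then 1 else if k = 1 ∧ l = 1 then -1 else 0)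
      ↔ α ≤ 1 / 2 := by
  show Cyclic2 α fcoef ↔ α ≤ 1/2
  constructor
  · rintro ⟨p, hpoly, htend⟩
    by_contra hα'
    push_neg at hα'
    have hε : (0:ℝ≥0∞) < ENNReal.ofReal (1 / Cval α) :=
      ENNReal.ofReal_pos.2 (by have := Cval_pos α hα'; positivity)
    have hev := htend.eventually_lt_const hε
    obtain ⟨n, hn⟩ := hev.exists
    obtain ⟨m, hm⟩ := hpoly n
    exact absurd (lower_bound α hα' m (p n) hm) (not_le.2 hn)
  · exact backward α
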